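/- arXiv:2402.10589 — 6 statements merged into one kernel-verified Lean document; each statement's English description precedes it below -/
import Mathlib

section
/- The series ∑_{n=0}^∞ (-1)^n (1/(6n+1) + 1/(6n+5)) converges to π/3. -/
open Filter

lemma key_split (N : ℕ) :
    ∑ n ∈ Finset.range N, (-1 : ℝ) ^ n * (1 / (6 * n + 1) + 1 / (6 * n + 5)) =
      (∑ m ∈ Finset.range (3 * N), (-1 : ℝ) ^ m / (2 * m + 1)) +
        ∑ n ∈ Finset.range N, (-1 : ℝ) ^ n * (1 / (6 * n + 3)) := by
  induction N with
  | zero => simp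
  | succ N ih =>
    rw [Finset.sum_range_succ, ih, Nat.mul_succ, Finset.sum_range_succ,
      Finset.sum_range_succ, Finset.sum_range_succ, Finset.sum_range_succ]
    have h1 : ((-1 : ℝ)) ^ (3 * N) = (-1) ^ N := by
      rw [pow_mul]; norm_num
    simp only [pow_succ, h1]
    push_cast
    ring

theorem series_pi_div_three :
    Tendsto (fun N => ∑ n ∈ Finset.range N,
        (-1 : ℝ) ^ n * (1 / (6 * n + 1) + 1 / (6 * n + 5))) atTop
      (nhds (Real.pi / 3)) := by
  have hL := Real.tendsto_sum_pi_div_four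
  have h3 : Tendsto (fun N : ℕ => 3 * N) atTop atTop :=
    Filter.tendsto_atTop_atTop.mpr fun b => ⟨b, fun a ha => by omega⟩
  have hA : Tendsto (fun N : ℕ => ∑ m ∈ Finset.range (3 * N), (-1 : ℝ) ^ m / (2 * m + 1))
      atTop (nhds (Real.pi / 4)) := hL.comp h3
  have hBeq : ∀ N : ℕ, ∑ n ∈ Finset.range N, (-1 : ℝ) ^ n * (1 / (6 * n + 3)) =
      (1 / 3) * ∑ n ∈ Finset.range N, (-1 : ℝ) ^ n / (2 * n + 1) := by
    intro N
    rw [Finset.mul_sum]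
    apply Finset.sum_congr rfl
    intro n _
    have hn1 : (6 * (n : ℝ) + 3) ≠ 0 := by positivity
    have hn2 : (2 * (n : ℝ) + 1) ≠ 0 := by positivity
    field_simp
    ring
  have hB : Tendsto (fun N : ℕ => ∑ n ∈ Finset.range N, (-1 : ℝ) ^ n * (1 / (6 * n + 3)))
      atTop (nhds ((1 / 3) * (Real.pi / 4))) := by
    simp only [hBeq]
    exact hL.const_mul _
  have := hA.add hB
  have hpi : Real.pi / 4 + (1 / 3) * (Real.pi / 4) = Real.pi / 3 := by ring
  rw [hpi] at this
  refine this.congr fun N => (key_split N).symm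
end

section
/- The integral from 0 to 1 of (1-x^6)(1-x^10)(1+x^12)/(1+x^30) dx equals 4π/15. -/
open Real

set_option maxHeartbeats 1000000 in
theorem integral_three :
    (∫ x in (0:ℝ)..1, (1 - x ^ 6) * (1 - x ^ 10) * (1 + x ^ 12) / (1 + x ^ 30))
      = 4 * Real.pi / 15 := by
  set F : ℝ → ℝ := fun x =>
    4 / 5 * arctan x + 4 / 15 * arctan (x ^ 3)
      + 2 / 15 * arctan ((x - x ^ 3) / (x ^ 4 - x ^ 2 + 1))
      + 1 / 15 * arctan ((x + x ^ 3 - x ^ 5 - x ^ 7) / (x ^ 8 - x ^ 4 + 1)) with hF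
  have h20 : ∀ x : ℝ, x ^ 4 - x ^ 2 + 1 ≠ 0 := by
    intro x
    nlinarith [sq_nonneg (x ^ 2 - 1 / 2), sq_nonneg x]
  have h60 : ∀ x : ℝ, x ^ 8 - x ^ 4 + 1 ≠ 0 := by
    intro x
    nlinarith [sq_nonneg (x ^ 4 - 1 / 2), sq_nonneg (x ^ 2)]
  have h30 : ∀ x : ℝ, (1 : ℝ) + x ^ 30 ≠ 0 := by
    intro x
    positivity
  have hderiv : ∀ x ∈ Set.uIcc (0:ℝ) 1,
      HasDerivAt F ((1 - x ^ 6) * (1 - x ^ 10) * (1 + x ^ 12) / (1 + x ^ 30)) x := by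
    intro x _
    have hx2 : (1 : ℝ) + x ^ 2 ≠ 0 := by positivity
    have hx6 : (1 : ℝ) + (x ^ 3) ^ 2 ≠ 0 := by positivity
    have d1 : HasDerivAt (fun y : ℝ => arctan y) (1 / (1 + x ^ 2)) x :=
      Real.hasDerivAt_arctan x
    have d2 : HasDerivAt (fun y : ℝ => arctan (y ^ 3))
        (1 / (1 + (x ^ 3) ^ 2) * (3 * x ^ 2)) x := by
      have := (hasDerivAt_pow 3 x).arctan
      simpa using this
    have du3 : HasDerivAt (fun y : ℝ => (y - y ^ 3) / (y ^ 4 - y ^ 2 + 1))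
        (((1 - 3 * x ^ 2) * (x ^ 4 - x ^ 2 + 1) - (x - x ^ 3) * (4 * x ^ 3 - 2 * x))
          / (x ^ 4 - x ^ 2 + 1) ^ 2) x := by
      have hnum : HasDerivAt (fun y : ℝ => y - y ^ 3) (1 - 3 * x ^ 2) x := by
        exact ((hasDerivAt_id' x).sub (hasDerivAt_pow 3 x)).congr_deriv (by norm_num)
      have hden : HasDerivAt (fun y : ℝ => y ^ 4 - y ^ 2 + 1) (4 * x ^ 3 - 2 * x) x := by
        simpa using ((hasDerivAt_pow 4 x).sub (hasDerivAt_pow 2 x)).add_const 1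
      exact hnum.div hden (h20 x)
    have d3 : HasDerivAt (fun y : ℝ => arctan ((y - y ^ 3) / (y ^ 4 - y ^ 2 + 1)))
        (1 / (1 + ((x - x ^ 3) / (x ^ 4 - x ^ 2 + 1)) ^ 2) *
          (((1 - 3 * x ^ 2) * (x ^ 4 - x ^ 2 + 1) - (x - x ^ 3) * (4 * x ^ 3 - 2 * x))
            / (x ^ 4 - x ^ 2 + 1) ^ 2)) x := du3.arctan
    have du4 : HasDerivAt (fun y : ℝ => (y + y ^ 3 - y ^ 5 - y ^ 7) / (y ^ 8 - y ^ 4 + 1))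
        (((1 + 3 * x ^ 2 - 5 * x ^ 4 - 7 * x ^ 6) * (x ^ 8 - x ^ 4 + 1)
            - (x + x ^ 3 - x ^ 5 - x ^ 7) * (8 * x ^ 7 - 4 * x ^ 3))
          / (x ^ 8 - x ^ 4 + 1) ^ 2) x := by
      have hnum : HasDerivAt (fun y : ℝ => y + y ^ 3 - y ^ 5 - y ^ 7)
          (1 + 3 * x ^ 2 - 5 * x ^ 4 - 7 * x ^ 6) x := by
        exact ((((hasDerivAt_id' x).add (hasDerivAt_pow 3 x)).sub
          (hasDerivAt_pow 5 x)).sub (hasDerivAt_pow 7 x)).congr_deriv (by norm_num)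
      have hden : HasDerivAt (fun y : ℝ => y ^ 8 - y ^ 4 + 1) (8 * x ^ 7 - 4 * x ^ 3) x := by
        simpa using ((hasDerivAt_pow 8 x).sub (hasDerivAt_pow 4 x)).add_const 1
      exact hnum.div hden (h60 x)
    have d4 : HasDerivAt
        (fun y : ℝ => arctan ((y + y ^ 3 - y ^ 5 - y ^ 7) / (y ^ 8 - y ^ 4 + 1)))
        (1 / (1 + ((x + x ^ 3 - x ^ 5 - x ^ 7) / (x ^ 8 - x ^ 4 + 1)) ^ 2) *
          (((1 + 3 * x ^ 2 - 5 * x ^ 4 - 7 * x ^ 6) * (x ^ 8 - x ^ 4 + 1)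
              - (x + x ^ 3 - x ^ 5 - x ^ 7) * (8 * x ^ 7 - 4 * x ^ 3))
            / (x ^ 8 - x ^ 4 + 1) ^ 2)) x := du4.arctan
    have hp20 : x ^ 8 - x ^ 6 + x ^ 4 - x ^ 2 + 1 ≠ 0 := by
      nlinarith [sq_nonneg (x ^ 4 - x ^ 2), sq_nonneg (x ^ 3 - x), sq_nonneg x, sq_nonneg (x^2-1)]
    have hp60 : x ^ 16 + x ^ 14 - x ^ 10 - x ^ 8 - x ^ 6 + x ^ 2 + 1 ≠ 0 := by
      have h := h60 x
      have h2 : x ^ 16 + x ^ 14 - x ^ 10 - x ^ 8 - x ^ 6 + x ^ 2 + 1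
          = (x ^ 8 - x ^ 4 + 1) ^ 2 + (x + x ^ 3 - x ^ 5 - x ^ 7) ^ 2 := by ring
      rw [h2]
      positivity
    have key3 : 1 / (1 + ((x - x ^ 3) / (x ^ 4 - x ^ 2 + 1)) ^ 2) *
          (((1 - 3 * x ^ 2) * (x ^ 4 - x ^ 2 + 1) - (x - x ^ 3) * (4 * x ^ 3 - 2 * x))
            / (x ^ 4 - x ^ 2 + 1) ^ 2)
        = (1 - 2 * x ^ 2 - 2 * x ^ 4 + x ^ 6) / (x ^ 8 - x ^ 6 + x ^ 4 - x ^ 2 + 1) := by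
      have hq := h20 x
      have e : 1 + ((x - x ^ 3) / (x ^ 4 - x ^ 2 + 1)) ^ 2
          = (x ^ 8 - x ^ 6 + x ^ 4 - x ^ 2 + 1) / (x ^ 4 - x ^ 2 + 1) ^ 2 := by
        rw [div_pow, one_add_div (pow_ne_zero 2 hq)]
        congr 1
        ring
      rw [e, one_div_div, div_mul_div_comm,
        div_eq_div_iff (mul_ne_zero hp20 (pow_ne_zero 2 hq)) hp20]
      ring
    have key4 : 1 / (1 + ((x + x ^ 3 - x ^ 5 - x ^ 7) / (x ^ 8 - x ^ 4 + 1)) ^ 2) *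
          (((1 + 3 * x ^ 2 - 5 * x ^ 4 - 7 * x ^ 6) * (x ^ 8 - x ^ 4 + 1)
              - (x + x ^ 3 - x ^ 5 - x ^ 7) * (8 * x ^ 7 - 4 * x ^ 3))
            / (x ^ 8 - x ^ 4 + 1) ^ 2)
        = (1 + 3 * x ^ 2 - 2 * x ^ 4 - 6 * x ^ 6 - 6 * x ^ 8 - 2 * x ^ 10 + 3 * x ^ 12 + x ^ 14)
            / (x ^ 16 + x ^ 14 - x ^ 10 - x ^ 8 - x ^ 6 + x ^ 2 + 1) := by
      have hq := h60 x
      have e : 1 + ((x + x ^ 3 - x ^ 5 - x ^ 7) / (x ^ 8 - x ^ 4 + 1)) ^ 2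
          = (x ^ 16 + x ^ 14 - x ^ 10 - x ^ 8 - x ^ 6 + x ^ 2 + 1) / (x ^ 8 - x ^ 4 + 1) ^ 2 := by
        rw [div_pow, one_add_div (pow_ne_zero 2 hq)]
        congr 1
        ring
      rw [e, one_div_div, div_mul_div_comm,
        div_eq_div_iff (mul_ne_zero hp60 (pow_ne_zero 2 hq)) hp60]
      ring
    rw [key3] at d3
    rw [key4] at d4
    have dF := (((d1.const_mul (4/5 : ℝ)).add (d2.const_mul (4/15 : ℝ))).add
      (d3.const_mul (2/15 : ℝ))).add (d4.const_mul (1/15 : ℝ))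
    refine dF.congr_deriv ?_
    simp only [mul_div_assoc', div_mul_eq_mul_div, div_div, mul_one, one_mul]
    rw [div_add_div _ _ (by simp [hx2]) (by simp [hx6]),
      div_add_div _ _ (by simp [hx2, hx6]) (by simp [hp20]),
      div_add_div _ _ (by simp [hx2, hx6, hp20]) (by simp [hp60]),
      div_eq_div_iff (by simp [hx2, hx6, hp20, hp60]) (h30 x)]
    ring
  have hcont : IntervalIntegrable
      (fun x : ℝ => (1 - x ^ 6) * (1 - x ^ 10) * (1 + x ^ 12) / (1 + x ^ 30))
      MeasureTheory.volume 0 1 := by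
    apply Continuous.intervalIntegrable
    exact (continuous_const.sub (continuous_pow 6) |>.mul
      (continuous_const.sub (continuous_pow 10)) |>.mul
      (continuous_const.add (continuous_pow 12))).div
      (continuous_const.add (continuous_pow 30)) h30
  rw [intervalIntegral.integral_eq_sub_of_hasDerivAt hderiv hcont]
  have h1 : F 1 = 4 * Real.pi / 15 := by
    rw [hF]
    norm_num [Real.arctan_one]
    ring
  have h0 : F 0 = 0 := by
    rw [hF]
    norm_num
  rw [h1, h0, sub_zero]
end

section
/- The series ∑_{n=0}^∞ (-1)^n (1/(30n+1) - 1/(30n+7) - 1/(30n+11) + 1/(30n+13) + 1/(30n+17) - 1/(30n+19) - 1/(30n+23) + 1/(30n+29)) converges to 4π/15. -/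
open Filter

private lemma ident (x : ℝ) (hx : 0 ≤ x) :
    1/(30*x+1) - 1/(30*x+7) - 1/(30*x+11) + 1/(30*x+13) + 1/(30*x+17) - 1/(30*x+19)
      - 1/(30*x+23) + 1/(30*x+29)
    = (1/(30*x+1) - 1/(30*x+3) + 1/(30*x+5) - 1/(30*x+7) + 1/(30*x+9) - 1/(30*x+11)
        + 1/(30*x+13) - 1/(30*x+15) + 1/(30*x+17) - 1/(30*x+19) + 1/(30*x+21) - 1/(30*x+23)
        + 1/(30*x+25) - 1/(30*x+27) + 1/(30*x+29))
      + (1/3) * (1/(10*x+1) - 1/(10*x+3) + 1/(10*x+5) - 1/(10*x+7) + 1/(10*x+9))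
      - (1/5) * (1/(6*x+1) - 1/(6*x+3) + 1/(6*x+5))
      - (1/15) * (1/(2*x+1)) := by
  have c3 : (1/3 : ℝ) * (1/(10*x+1) - 1/(10*x+3) + 1/(10*x+5) - 1/(10*x+7) + 1/(10*x+9))
      = 1/(30*x+3) - 1/(30*x+9) + 1/(30*x+15) - 1/(30*x+21) + 1/(30*x+27) := by
    have h1 : (10*x+1 : ℝ) ≠ 0 := by positivity
    have h2 : (10*x+3 : ℝ) ≠ 0 := by positivity
    have h3 : (10*x+5 : ℝ) ≠ 0 := by positivity
    have h4 : (10*x+7 : ℝ) ≠ 0 := by positivity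
    have h5 : (10*x+9 : ℝ) ≠ 0 := by positivity
    rw [show (30*x+3 : ℝ) = 3*(10*x+1) by ring, show (30*x+9 : ℝ) = 3*(10*x+3) by ring,
      show (30*x+15 : ℝ) = 3*(10*x+5) by ring, show (30*x+21 : ℝ) = 3*(10*x+7) by ring,
      show (30*x+27 : ℝ) = 3*(10*x+9) by ring]
    field_simp
  have c5 : (1/5 : ℝ) * (1/(6*x+1) - 1/(6*x+3) + 1/(6*x+5))
      = 1/(30*x+5) - 1/(30*x+15) + 1/(30*x+25) := by
    have h1 : (6*x+1 : ℝ) ≠ 0 := by positivity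
    have h2 : (6*x+3 : ℝ) ≠ 0 := by positivity
    have h3 : (6*x+5 : ℝ) ≠ 0 := by positivity
    rw [show (30*x+5 : ℝ) = 5*(6*x+1) by ring, show (30*x+15 : ℝ) = 5*(6*x+3) by ring,
      show (30*x+25 : ℝ) = 5*(6*x+5) by ring]
    field_simp
  have c15 : (1/15 : ℝ) * (1/(2*x+1)) = 1/(30*x+15) := by
    have h1 : (2*x+1 : ℝ) ≠ 0 := by positivity
    rw [show (30*x+15 : ℝ) = 15*(2*x+1) by ring]
    field_simp
  rw [c3, c5, c15]
  ring

/-- Partial sums of the Leibniz series. -/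
noncomputable def Leib (m : ℕ) : ℝ := ∑ i ∈ Finset.range m, (-1 : ℝ) ^ i / (2 * i + 1)

private lemma key (N : ℕ) : (∑ n ∈ Finset.range N,
      (-1 : ℝ) ^ n * (1 / (30 * n + 1) - 1 / (30 * n + 7) - 1 / (30 * n + 11)
        + 1 / (30 * n + 13) + 1 / (30 * n + 17) - 1 / (30 * n + 19)
        - 1 / (30 * n + 23) + 1 / (30 * n + 29)))
    = Leib (15*N) + (1/3) * Leib (5*N) - (1/5) * Leib (3*N) - (1/15) * Leib N := by
  induction N with
  | zero => simp [Leib]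
  | succ N ih =>
    rw [Finset.sum_range_succ, ih,
      show 15*(N+1) = 15*N + 15 by ring, show 5*(N+1) = 5*N + 5 by ring,
      show 3*(N+1) = 3*N + 3 by ring]
    unfold Leib
    rw [Finset.sum_range_add, Finset.sum_range_add, Finset.sum_range_add,
      Finset.sum_range_succ]
    simp only [Finset.sum_range_succ, Finset.sum_range_zero, pow_add, pow_mul]
    push_cast
    norm_num
    have hx := ident (N:ℝ) (by positivity)
    ring_nf
    linear_combination ((-1:ℝ)^N) * hx

private lemma leib_tendsto : Tendsto Leib atTop (nhds (Real.pi/4)) :=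
  Real.tendsto_sum_pi_div_four

private lemma leib_mul (c : ℕ) (hc : 0 < c) :
    Tendsto (fun N => Leib (c * N)) atTop (nhds (Real.pi/4)) :=
  leib_tendsto.comp (tendsto_atTop_atTop.mpr fun b =>
    ⟨b, fun a ha => ha.trans (Nat.le_mul_of_pos_left a hc)⟩)

theorem series_four_pi_div_fifteen :
    Tendsto (fun N => ∑ n ∈ Finset.range N,
        (-1 : ℝ) ^ n * (1 / (30 * n + 1) - 1 / (30 * n + 7) - 1 / (30 * n + 11)
          + 1 / (30 * n + 13) + 1 / (30 * n + 17) - 1 / (30 * n + 19)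
          - 1 / (30 * n + 23) + 1 / (30 * n + 29))) atTop
      (nhds (4 * Real.pi / 15)) := by
  have h := (((leib_mul 15 (by norm_num)).add ((leib_mul 5 (by norm_num)).const_mul (1/3))).sub
      ((leib_mul 3 (by norm_num)).const_mul (1/5))).sub (leib_tendsto.const_mul (1/15))
  simp only [key]
  convert h using 2 <;> ring
end

section
/- The integral from 0 to 1 of (1+x^6)(1-x^10)(1+x^12)/(1-x^30) dx equals √3·π/5. -/
lemma quadpos (θ : ℝ) (h0 : 0 < θ) (h1 : θ < Real.pi) (x : ℝ) :
    0 < x^2 - 2*Real.cos θ*x + 1 := by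
  have hs := Real.sin_pos_of_pos_of_lt_pi h0 h1
  nlinarith [sq_nonneg (x - Real.cos θ), Real.sin_sq_add_cos_sq θ, mul_pos hs hs]

lemma term_cont (C θ : ℝ) (h0 : 0 < θ) (h1 : θ < Real.pi) :
    Continuous (fun x : ℝ => C * (Real.sin θ / (x^2 - 2*Real.cos θ*x + 1))) :=
  continuous_const.mul (continuous_const.div (by continuity) (fun x => (quadpos θ h0 h1 x).ne'))

lemma sin_quad_integral (θ : ℝ) (h0 : 0 < θ) (h1 : θ < Real.pi) :
    ∫ x in (0:ℝ)..1, Real.sin θ / (x^2 - 2*Real.cos θ*x + 1) = (Real.pi - θ)/2 := by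
  have hs := Real.sin_pos_of_pos_of_lt_pi h0 h1
  have hderiv : ∀ x ∈ Set.uIcc (0:ℝ) 1,
      HasDerivAt (fun y => Real.arctan ((y - Real.cos θ)/Real.sin θ))
        (Real.sin θ / (x^2 - 2*Real.cos θ*x + 1)) x := by
    intro x _
    have hlin : HasDerivAt (fun y : ℝ => (y - Real.cos θ)/Real.sin θ) (1/Real.sin θ) x := by
      simpa using ((hasDerivAt_id x).sub_const (Real.cos θ)).div_const (Real.sin θ)
    have h2 := (Real.hasDerivAt_arctan ((x - Real.cos θ)/Real.sin θ)).comp x hlin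
    refine h2.congr_deriv ?_
    have hq := quadpos θ h0 h1 x
    have hden : 1 + ((x - Real.cos θ)/Real.sin θ)^2 = (x^2 - 2*Real.cos θ*x + 1)/Real.sin θ^2 := by
      field_simp
      linear_combination Real.sin_sq_add_cos_sq θ
    rw [hden]
    field_simp
  have hcont : Continuous fun x : ℝ => Real.sin θ / (x^2 - 2*Real.cos θ*x + 1) :=
    continuous_const.div (by continuity) (fun x => (quadpos θ h0 h1 x).ne')
  rw [intervalIntegral.integral_eq_sub_of_hasDerivAt hderiv (hcont.intervalIntegrable 0 1)]
  have hhalfpos : 0 < θ/2 := by linarith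
  have hhalflt : θ/2 < Real.pi/2 := by linarith
  have hcoshalf : 0 < Real.cos (θ/2) := Real.cos_pos_of_mem_Ioo ⟨by linarith, hhalflt⟩
  have hsinhalf : 0 < Real.sin (θ/2) := Real.sin_pos_of_pos_of_lt_pi hhalfpos (by linarith)
  have hsin2 : Real.sin θ = 2*Real.sin (θ/2)*Real.cos (θ/2) := by
    have := Real.sin_two_mul (θ/2); rw [show 2*(θ/2) = θ by ring] at this; linarith
  have hcos2 : Real.cos θ = 1 - 2*Real.sin (θ/2)^2 := by
    have h' := Real.cos_two_mul (θ/2)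
    rw [show 2*(θ/2) = θ by ring] at h'
    have := Real.sin_sq_add_cos_sq (θ/2)
    nlinarith
  have e1 : (1 - Real.cos θ)/Real.sin θ = Real.tan (θ/2) := by
    rw [Real.tan_eq_sin_div_cos, hsin2, hcos2]
    rw [div_eq_div_iff (by nlinarith) (by nlinarith)]
    ring
  have e2 : (0 - Real.cos θ)/Real.sin θ = Real.tan (θ - Real.pi/2) := by
    rw [Real.tan_eq_sin_div_cos, Real.sin_sub_pi_div_two, Real.cos_sub_pi_div_two]
    ring
  rw [e1, e2, Real.arctan_tan (by linarith) hhalflt,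
    Real.arctan_tan (by linarith) (by linarith)]
  ring

set_option maxHeartbeats 1000000 in
lemma keyA (c x : ℝ) (hq : 16*c^4 + 8*c^3 - 16*c^2 - 8*c + 1 = 0) :
    (x^2 - 2*(c)*x + 1) * (x^2 - 2*(-1 + 2*c^2)*x + 1) * (x^2 - 2*((1/2) + 4*c - 4*c^3)*x + 1) * (x^2 - 2*((1/2))*x + 1) * (x^2 - 2*(-1 + 3*c + 2*c^2 - 4*c^3)*x + 1) * (x^2 - 2*(1 - 3*c - 2*c^2 + 4*c^3)*x + 1) * (x^2 - 2*(-(1/2))*x + 1) * (x^2 - 2*(-(1/2) - 4*c + 4*c^3)*x + 1) * (x^2 - 2*(1 - 2*c^2)*x + 1) * (x^2 - 2*(-c)*x + 1) = 1 + x^10 + x^20 := by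
  linear_combination ((8*c - 8*c^2)*x^2 + (-2 + 48*c + 32*c^2 - 256*c^3 - 16*c^4 + 576*c^5 - 256*c^6 - 384*c^7 + 256*c^8)*x^4 + (-2 + 40*c + 24*c^2 + 608*c^3 + 32*c^4 - 5248*c^5 + 1216*c^6 + 14336*c^7 - 6400*c^8 - 15872*c^9 + 9216*c^10 + 6144*c^11 - 4096*c^12)*x^6 + (1 - 56*c - 96*c^2 + 3240*c^3 + 1136*c^4 - 25472*c^5 + 2816*c^6 + 80640*c^7 - 29440*c^8 - 121856*c^9 + 62464*c^10 + 88064*c^11 - 53248*c^12 - 24576*c^13 + 16384*c^14)*x^8 + (3 - 104*c - 144*c^2 + 4360*c^3 + 1200*c^4 - 31872*c^5 + 4544*c^6 + 95744*c^7 - 36352*c^8 - 137728*c^9 + 71680*c^10 + 94208*c^11 - 57344*c^12 - 24576*c^13 + 16384*c^14)*x^10 + (1 - 56*c - 96*c^2 + 3240*c^3 + 1136*c^4 - 25472*c^5 + 2816*c^6 + 80640*c^7 - 29440*c^8 - 121856*c^9 + 62464*c^10 + 88064*c^11 - 53248*c^12 - 24576*c^13 + 16384*c^14)*x^12 + (-2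 + 40*c + 24*c^2 + 608*c^3 + 32*c^4 - 5248*c^5 + 1216*c^6 + 14336*c^7 - 6400*c^8 - 15872*c^9 + 9216*c^10 + 6144*c^11 - 4096*c^12)*x^14 + (-2 + 48*c + 32*c^2 - 256*c^3 - 16*c^4 + 576*c^5 - 256*c^6 - 384*c^7 + 256*c^8)*x^16 + (8*c - 8*c^2)*x^18) * hq

set_option maxHeartbeats 1000000 in
lemma keyB (c s x : ℝ) (hq : 16*c^4 + 8*c^3 - 16*c^2 - 8*c + 1 = 0) :
    (1)*(s*(1))*((x^2 - 2*(-1 + 2*c^2)*x + 1) * (x^2 - 2*((1/2) + 4*c - 4*c^3)*x + 1) * (x^2 - 2*((1/2))*x + 1) * (x^2 - 2*(-1 + 3*c + 2*c^2 - 4*c^3)*x + 1) * (x^2 - 2*(1 - 3*c - 2*c^2 + 4*c^3)*x + 1) * (x^2 - 2*(-(1/2))*x + 1) * (x^2 - 2*(-(1/2) - 4*c + 4*c^3)*x + 1) * (x^2 - 2*(1 - 2*c^2)*x + 1) * (x^2 - 2*(-c)*x + 1)) + (1)*(s*(2*c))*((x^2 - 2*(c)*x + 1) * (x^2 - 2*((1/2)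 + 4*c - 4*c^3)*x + 1) * (x^2 - 2*((1/2))*x + 1) * (x^2 - 2*(-1 + 3*c + 2*c^2 - 4*c^3)*x + 1) * (x^2 - 2*(1 - 3*c - 2*c^2 + 4*c^3)*x + 1) * (x^2 - 2*(-(1/2))*x + 1) * (x^2 - 2*(-(1/2) - 4*c + 4*c^3)*x + 1) * (x^2 - 2*(1 - 2*c^2)*x + 1) * (x^2 - 2*(-c)*x + 1)) + (-1)*(s*(-4*c + 8*c^3))*((x^2 - 2*(c)*x + 1) * (x^2 - 2*(-1 + 2*c^2)*x + 1) * (x^2 - 2*((1/2))*x + 1) * (x^2 - 2*(-1 + 3*c + 2*c^2 - 4*c^3)*x + 1) * (x^2 - 2*(1 - 3*c - 2*c^2 + 4*c^3)*x + 1) * (x^2 - 2*(-(1/2))*x + 1) * (x^2 - 2*(-(1/2) - 4*c + 4*c^3)*x + 1) * (x^2 - 2*(1 - 2*c^2)*x + 1) * (x^2 - 2*(-c)*x + 1)) + (4)*(s*(8*c + 4*c^2 - 8*c^3))*((x^2 - 2*(c)*x + 1) * (x^2 - 2*(-1 + 2*c^2)*x + 1) * (x^2 - 2*((1/2) + 4*c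 - 4*c^3)*x + 1) * (x^2 - 2*(-1 + 3*c + 2*c^2 - 4*c^3)*x + 1) * (x^2 - 2*(1 - 3*c - 2*c^2 + 4*c^3)*x + 1) * (x^2 - 2*(-(1/2))*x + 1) * (x^2 - 2*(-(1/2) - 4*c + 4*c^3)*x + 1) * (x^2 - 2*(1 - 2*c^2)*x + 1) * (x^2 - 2*(-c)*x + 1)) + (1)*(s*(-1 + 2*c + 4*c^2))*((x^2 - 2*(c)*x + 1) * (x^2 - 2*(-1 + 2*c^2)*x + 1) * (x^2 - 2*((1/2) + 4*c - 4*c^3)*x + 1) * (x^2 - 2*((1/2))*x + 1) * (x^2 - 2*(1 - 3*c - 2*c^2 + 4*c^3)*x + 1) * (x^2 - 2*(-(1/2))*x + 1) * (x^2 - 2*(-(1/2) - 4*c + 4*c^3)*x + 1) * (x^2 - 2*(1 - 2*c^2)*x + 1) * (x^2 - 2*(-c)*x + 1)) + (1)*(s*(-1 + 2*c + 4*c^2))*((x^2 - 2*(c)*x + 1) * (x^2 - 2*(-1 + 2*c^2)*x + 1) * (x^2 - 2*((1/2) + 4*c - 4*c^3)*x + 1) * (x^2 - 2*((1/2))*x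 + 1) * (x^2 - 2*(-1 + 3*c + 2*c^2 - 4*c^3)*x + 1) * (x^2 - 2*(-(1/2))*x + 1) * (x^2 - 2*(-(1/2) - 4*c + 4*c^3)*x + 1) * (x^2 - 2*(1 - 2*c^2)*x + 1) * (x^2 - 2*(-c)*x + 1)) + (4)*(s*(8*c + 4*c^2 - 8*c^3))*((x^2 - 2*(c)*x + 1) * (x^2 - 2*(-1 + 2*c^2)*x + 1) * (x^2 - 2*((1/2) + 4*c - 4*c^3)*x + 1) * (x^2 - 2*((1/2))*x + 1) * (x^2 - 2*(-1 + 3*c + 2*c^2 - 4*c^3)*x + 1) * (x^2 - 2*(1 - 3*c - 2*c^2 + 4*c^3)*x + 1) * (x^2 - 2*(-(1/2) - 4*c + 4*c^3)*x + 1) * (x^2 - 2*(1 - 2*c^2)*x + 1) * (x^2 - 2*(-c)*x + 1)) + (-1)*(s*(-4*c + 8*c^3))*((x^2 - 2*(c)*x + 1) * (x^2 - 2*(-1 + 2*c^2)*x + 1) * (x^2 - 2*((1/2) + 4*c - 4*c^3)*x + 1) * (x^2 - 2*((1/2))*x + 1) * (x^2 - 2*(-1 + 3*c + 2*c^2 -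 4*c^3)*x + 1) * (x^2 - 2*(1 - 3*c - 2*c^2 + 4*c^3)*x + 1) * (x^2 - 2*(-(1/2))*x + 1) * (x^2 - 2*(1 - 2*c^2)*x + 1) * (x^2 - 2*(-c)*x + 1)) + (1)*(s*(2*c))*((x^2 - 2*(c)*x + 1) * (x^2 - 2*(-1 + 2*c^2)*x + 1) * (x^2 - 2*((1/2) + 4*c - 4*c^3)*x + 1) * (x^2 - 2*((1/2))*x + 1) * (x^2 - 2*(-1 + 3*c + 2*c^2 - 4*c^3)*x + 1) * (x^2 - 2*(1 - 3*c - 2*c^2 + 4*c^3)*x + 1) * (x^2 - 2*(-(1/2))*x + 1) * (x^2 - 2*(-(1/2) - 4*c + 4*c^3)*x + 1) * (x^2 - 2*(-c)*x + 1)) + (1)*(s*(1))*((x^2 - 2*(c)*x + 1) * (x^2 - 2*(-1 + 2*c^2)*x + 1) * (x^2 - 2*((1/2) + 4*c - 4*c^3)*x + 1) * (x^2 - 2*((1/2))*x + 1) * (x^2 - 2*(-1 + 3*c + 2*c^2 - 4*c^3)*x + 1) * (x^2 - 2*(1 - 3*c - 2*c^2 + 4*c^3)*x + 1) * (x^2 -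 2*(-(1/2))*x + 1) * (x^2 - 2*(-(1/2) - 4*c + 4*c^3)*x + 1) * (x^2 - 2*(1 - 2*c^2)*x + 1)) = 10*s*(8*c + 4*c^2 - 8*c^3) * ((1+x^6)*(1+x^12)) := by
  linear_combination (s * ((-8 + 8*c + 600*c^2 - 272*c^3 - 896*c^4 + 576*c^5)*x^2 + (-8 - 80*c + 3448*c^2 + 3168*c^3 - 19136*c^4 - 9344*c^5 + 52096*c^6 + 1536*c^7 - 68608*c^8 + 20480*c^9 + 32768*c^10 - 16384*c^11)*x^4 + (-160*c + 2480*c^2 + 4704*c^3 + 38144*c^4 + 8768*c^5 - 374016*c^6 - 62464*c^7 + 1281536*c^8 - 61440*c^9 - 2119680*c^10 + 503808*c^11 + 1695744*c^12 - 655360*c^13 - 524288*c^14 + 262144*c^15)*x^6 + (16 + 72*c - 5584*c^2 - 8400*c^3 + 226880*c^4 + 170944*c^5 - 1853824*c^6 - 649728*c^7 + 6928384*c^8 + 430080*c^9 - 13897728*c^10 + 2023424*c^11 + 15417344*c^12 - 4587520*c^13 - 8912896*c^14 + 3670016*c^15 + 2097152*c^16 - 1048576*c^17)*x^8 + (16 +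 72*c - 5584*c^2 - 8400*c^3 + 226880*c^4 + 170944*c^5 - 1853824*c^6 - 649728*c^7 + 6928384*c^8 + 430080*c^9 - 13897728*c^10 + 2023424*c^11 + 15417344*c^12 - 4587520*c^13 - 8912896*c^14 + 3670016*c^15 + 2097152*c^16 - 1048576*c^17)*x^10 + (-160*c + 2480*c^2 + 4704*c^3 + 38144*c^4 + 8768*c^5 - 374016*c^6 - 62464*c^7 + 1281536*c^8 - 61440*c^9 - 2119680*c^10 + 503808*c^11 + 1695744*c^12 - 655360*c^13 - 524288*c^14 + 262144*c^15)*x^12 + (-8 - 80*c + 3448*c^2 + 3168*c^3 - 19136*c^4 - 9344*c^5 + 52096*c^6 + 1536*c^7 - 68608*c^8 + 20480*c^9 + 32768*c^10 - 16384*c^11)*x^14 + (-8 + 8*c + 600*c^2 - 272*c^3 - 896*c^4 + 576*c^5)*x^16)) * hq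

lemma frac10 {N D W a1 a2 a3 a4 a5 a6 a7 a8 a9 a10 u1 u2 u3 u4 u5 u6 u7 u8 u9 u10 : ℝ}
    (h1 : u1 ≠ 0)
    (h2 : u2 ≠ 0)
    (h3 : u3 ≠ 0)
    (h4 : u4 ≠ 0)
    (h5 : u5 ≠ 0)
    (h6 : u6 ≠ 0)
    (h7 : u7 ≠ 0)
    (h8 : u8 ≠ 0)
    (h9 : u9 ≠ 0)
    (h10 : u10 ≠ 0)
    (hW : W ≠ 0)
    (hD : u1*u2*u3*u4*u5*u6*u7*u8*u9*u10 = D)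
    (hN : a1*(u2*u3*u4*u5*u6*u7*u8*u9*u10) + a2*(u1*u3*u4*u5*u6*u7*u8*u9*u10) + a3*(u1*u2*u4*u5*u6*u7*u8*u9*u10) + a4*(u1*u2*u3*u5*u6*u7*u8*u9*u10) + a5*(u1*u2*u3*u4*u6*u7*u8*u9*u10) + a6*(u1*u2*u3*u4*u5*u7*u8*u9*u10) + a7*(u1*u2*u3*u4*u5*u6*u8*u9*u10) + a8*(u1*u2*u3*u4*u5*u6*u7*u9*u10) + a9*(u1*u2*u3*u4*u5*u6*u7*u8*u10) + a10*(u1*u2*u3*u4*u5*u6*u7*u8*u9) = W*N) :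
    N/D = (a1/W)/u1 + (a2/W)/u2 + (a3/W)/u3 + (a4/W)/u4 + (a5/W)/u5 + (a6/W)/u6 + (a7/W)/u7 + (a8/W)/u8 + (a9/W)/u9 + (a10/W)/u10 := by
  rw [← hD]
  field_simp
  linear_combination (-1) * hN

set_option maxHeartbeats 2000000 in
theorem integral_sqrt3_pi_div_five :
    (∫ x in (0:ℝ)..1, (1 + x ^ 6) * (1 - x ^ 10) * (1 + x ^ 12) / (1 - x ^ 30))
      = Real.sqrt 3 * Real.pi / 5 := by
  set c := Real.cos (Real.pi/15) with hc
  set s := Real.sin (Real.pi/15) with hs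
  have hc1 : Real.cos (Real.pi/15) = c := hc.symm
  have hs1 : Real.sin (Real.pi/15) = s := hs.symm
  have hpy : s^2 = 1 - c^2 := by rw [hc, hs]; linear_combination Real.sin_sq_add_cos_sq (Real.pi/15)
  have hc2u : Real.cos (2*Real.pi/15) = -1 + 2*c^2 := by
    rw [show (2:ℝ)*Real.pi/15 = Real.pi/15 + Real.pi/15 by ring, Real.cos_add, hc1, hs1]
    linear_combination (-1) * hpy

  have hs2u : Real.sin (2*Real.pi/15) = s*(2*c) := by
    rw [show (2:ℝ)*Real.pi/15 = Real.pi/15 + Real.pi/15 by ring, Real.sin_add, hc1, hs1]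
    ring

  have hc3u : Real.cos (3*Real.pi/15) = -3*c + 4*c^3 := by
    rw [show (3:ℝ)*Real.pi/15 = 2*Real.pi/15 + Real.pi/15 by ring, Real.cos_add, hc2u, hs2u]
    linear_combination (-2*c) * hpy

  have hs3u : Real.sin (3*Real.pi/15) = s*(-1 + 4*c^2) := by
    rw [show (3:ℝ)*Real.pi/15 = 2*Real.pi/15 + Real.pi/15 by ring, Real.sin_add, hc2u, hs2u]
    ring

  have hc4u : Real.cos (4*Real.pi/15) = 1 - 8*c^2 + 8*c^4 := by
    rw [show (4:ℝ)*Real.pi/15 = 3*Real.pi/15 + Real.pi/15 by ring, Real.cos_add, hc3u, hs3u]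
    linear_combination (1 - 4*c^2) * hpy

  have hs4u : Real.sin (4*Real.pi/15) = s*(-4*c + 8*c^3) := by
    rw [show (4:ℝ)*Real.pi/15 = 3*Real.pi/15 + Real.pi/15 by ring, Real.sin_add, hc3u, hs3u]
    ring

  have hc5u : Real.cos (5*Real.pi/15) = 5*c - 20*c^3 + 16*c^5 := by
    rw [show (5:ℝ)*Real.pi/15 = 4*Real.pi/15 + Real.pi/15 by ring, Real.cos_add, hc4u, hs4u]
    linear_combination (4*c - 8*c^3) * hpy

  have hs5u : Real.sin (5*Real.pi/15) = s*(1 - 12*c^2 + 16*c^4) := by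
    rw [show (5:ℝ)*Real.pi/15 = 4*Real.pi/15 + Real.pi/15 by ring, Real.sin_add, hc4u, hs4u]
    ring

  have hc5v : Real.cos (5*Real.pi/15) = 1/2 := by
    rw [show (5:ℝ)*Real.pi/15 = Real.pi/3 by ring, Real.cos_pi_div_three]
  have hchalf : 5*c - 20*c^3 + 16*c^5 = 1/2 := by rw [← hc5u]; exact hc5v
  have hclt : 1/2 < c := by
    rw [hc]
    have h' := Real.cos_lt_cos_of_nonneg_of_le_pi (x := Real.pi/15) (y := Real.pi/3)
      (by positivity) (by linarith [Real.pi_pos]) (by linarith [Real.pi_pos])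
    rwa [Real.cos_pi_div_three] at h'
  have hq : 16*c^4 + 8*c^3 - 16*c^2 - 8*c + 1 = 0 := by
    have hfac : (2*c - 1)*(16*c^4 + 8*c^3 - 16*c^2 - 8*c + 1) = 0 := by linear_combination 2*hchalf
    rcases mul_eq_zero.mp hfac with h | h
    · exfalso; linarith
    · exact h
  have hc2 : Real.cos (2*Real.pi/15) = -1 + 2*c^2 := by rw [hc2u]; all_goals ring
  have hs2 : Real.sin (2*Real.pi/15) = s*(2*c) := by rw [hs2u]; all_goals ring
  have hc3 : Real.cos (3*Real.pi/15) = -3*c + 4*c^3 := by rw [hc3u]; all_goals ring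
  have hs3 : Real.sin (3*Real.pi/15) = s*(-1 + 4*c^2) := by rw [hs3u]; all_goals ring
  have hc4 : Real.cos (4*Real.pi/15) = (1/2) + 4*c - 4*c^3 := by rw [hc4u]; linear_combination ((1/2)) * hq
  have hs4 : Real.sin (4*Real.pi/15) = s*(-4*c + 8*c^3) := by rw [hs4u]; all_goals ring
  have hc5 : Real.cos (5*Real.pi/15) = (1/2) := hc5v
  have hs5 : Real.sin (5*Real.pi/15) = s*(8*c + 4*c^2 - 8*c^3) := by rw [hs5u]; linear_combination (s * (1)) * hq
  have hc6 : Real.cos (6*Real.pi/15) = -(1/2) - 3*c + 4*c^3 := by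
    rw [show (6:ℝ)*Real.pi/15 = 5*Real.pi/15 + Real.pi/15 by ring, Real.cos_add, hc5, hs5]
    linear_combination ((1/2) - (1/2)*c) * hq + (-8*c - 4*c^2 + 8*c^3) * hpy

  have hs6 : Real.sin (6*Real.pi/15) = s*(1 - 4*c + 8*c^3) := by
    rw [show (6:ℝ)*Real.pi/15 = 5*Real.pi/15 + Real.pi/15 by ring, Real.sin_add, hc5, hs5]
    linear_combination (s * (-(1/2))) * hq

  have hc7 : Real.cos (7*Real.pi/15) = -1 + 3*c + 2*c^2 - 4*c^3 := by
    rw [show (7:ℝ)*Real.pi/15 = 6*Real.pi/15 + Real.pi/15 by ring, Real.cos_add, hc6, hs6]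
    linear_combination ((1/2)*c) * hq + (-1 + 4*c - 8*c^3) * hpy

  have hs7 : Real.sin (7*Real.pi/15) = s*(-1 + 2*c + 4*c^2) := by
    rw [show (7:ℝ)*Real.pi/15 = 6*Real.pi/15 + Real.pi/15 by ring, Real.sin_add, hc6, hs6]
    linear_combination (s * ((1/2))) * hq

  have hc8 : Real.cos (8*Real.pi/15) = 1 - 3*c - 2*c^2 + 4*c^3 := by
    rw [show (8:ℝ)*Real.pi/15 = Real.pi - 7*Real.pi/15 by ring, Real.cos_pi_sub, hc7]
    all_goals ring
  have hs8 : Real.sin (8*Real.pi/15) = s*(-1 + 2*c + 4*c^2) := by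
    rw [show (8:ℝ)*Real.pi/15 = Real.pi - 7*Real.pi/15 by ring, Real.sin_pi_sub, hs7]
    all_goals ring
  have hc10 : Real.cos (10*Real.pi/15) = -(1/2) := by
    rw [show (10:ℝ)*Real.pi/15 = Real.pi - 5*Real.pi/15 by ring, Real.cos_pi_sub, hc5]
    all_goals ring
  have hs10 : Real.sin (10*Real.pi/15) = s*(8*c + 4*c^2 - 8*c^3) := by
    rw [show (10:ℝ)*Real.pi/15 = Real.pi - 5*Real.pi/15 by ring, Real.sin_pi_sub, hs5]
    all_goals ring
  have hc11 : Real.cos (11*Real.pi/15) = -(1/2) - 4*c + 4*c^3 := by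
    rw [show (11:ℝ)*Real.pi/15 = Real.pi - 4*Real.pi/15 by ring, Real.cos_pi_sub, hc4]
    all_goals ring
  have hs11 : Real.sin (11*Real.pi/15) = s*(-4*c + 8*c^3) := by
    rw [show (11:ℝ)*Real.pi/15 = Real.pi - 4*Real.pi/15 by ring, Real.sin_pi_sub, hs4]
    all_goals ring
  have hc13 : Real.cos (13*Real.pi/15) = 1 - 2*c^2 := by
    rw [show (13:ℝ)*Real.pi/15 = Real.pi - 2*Real.pi/15 by ring, Real.cos_pi_sub, hc2]
    all_goals ring
  have hs13 : Real.sin (13*Real.pi/15) = s*(2*c) := by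
    rw [show (13:ℝ)*Real.pi/15 = Real.pi - 2*Real.pi/15 by ring, Real.sin_pi_sub, hs2]
    all_goals ring
  have hc14 : Real.cos (14*Real.pi/15) = -c := by
    rw [show (14:ℝ)*Real.pi/15 = Real.pi - Real.pi/15 by ring, Real.cos_pi_sub, hc1]
    all_goals ring
  have hs14 : Real.sin (14*Real.pi/15) = s*(1) := by
    rw [show (14:ℝ)*Real.pi/15 = Real.pi - Real.pi/15 by ring, Real.sin_pi_sub, hs1]
    all_goals ring

  have hsqrt3 : Real.sqrt 3 = 2*s*(8*c + 4*c^2 - 8*c^3) := by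
    have hv : Real.sin (5*Real.pi/15) = Real.sqrt 3/2 := by
      rw [show (5:ℝ)*Real.pi/15 = Real.pi/3 by ring, Real.sin_pi_div_three]
    rw [hs5] at hv; linarith
  have hW5 : 10*s*(8*c + 4*c^2 - 8*c^3) = 5*Real.sqrt 3 := by linear_combination (-5) * hsqrt3
  have hsq3pos : (0:ℝ) < Real.sqrt 3 := by positivity
  have hWne : 10*s*(8*c + 4*c^2 - 8*c^3) ≠ 0 := by rw [hW5]; positivity
  have hu1 : ∀ x : ℝ, 0 < x^2 - 2*(c)*x + 1 := by
    intro x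
    have h' := quadpos (Real.pi/15) (by positivity) (by linarith [Real.pi_pos]) x
    rwa [hc1] at h'
  have hu2 : ∀ x : ℝ, 0 < x^2 - 2*(-1 + 2*c^2)*x + 1 := by
    intro x
    have h' := quadpos (2*Real.pi/15) (by positivity) (by linarith [Real.pi_pos]) x
    rwa [hc2] at h'
  have hu4 : ∀ x : ℝ, 0 < x^2 - 2*((1/2) + 4*c - 4*c^3)*x + 1 := by
    intro x
    have h' := quadpos (4*Real.pi/15) (by positivity) (by linarith [Real.pi_pos]) x
    rwa [hc4] at h'
  have hu5 : ∀ x : ℝ, 0 < x^2 - 2*((1/2))*x + 1 := by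
    intro x
    have h' := quadpos (5*Real.pi/15) (by positivity) (by linarith [Real.pi_pos]) x
    rwa [hc5] at h'
  have hu7 : ∀ x : ℝ, 0 < x^2 - 2*(-1 + 3*c + 2*c^2 - 4*c^3)*x + 1 := by
    intro x
    have h' := quadpos (7*Real.pi/15) (by positivity) (by linarith [Real.pi_pos]) x
    rwa [hc7] at h'
  have hu8 : ∀ x : ℝ, 0 < x^2 - 2*(1 - 3*c - 2*c^2 + 4*c^3)*x + 1 := by
    intro x
    have h' := quadpos (8*Real.pi/15) (by positivity) (by linarith [Real.pi_pos]) x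
    rwa [hc8] at h'
  have hu10 : ∀ x : ℝ, 0 < x^2 - 2*(-(1/2))*x + 1 := by
    intro x
    have h' := quadpos (10*Real.pi/15) (by positivity) (by linarith [Real.pi_pos]) x
    rwa [hc10] at h'
  have hu11 : ∀ x : ℝ, 0 < x^2 - 2*(-(1/2) - 4*c + 4*c^3)*x + 1 := by
    intro x
    have h' := quadpos (11*Real.pi/15) (by positivity) (by linarith [Real.pi_pos]) x
    rwa [hc11] at h'
  have hu13 : ∀ x : ℝ, 0 < x^2 - 2*(1 - 2*c^2)*x + 1 := by
    intro x
    have h' := quadpos (13*Real.pi/15) (by positivity) (by linarith [Real.pi_pos]) x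
    rwa [hc13] at h'
  have hu14 : ∀ x : ℝ, 0 < x^2 - 2*(-c)*x + 1 := by
    intro x
    have h' := quadpos (14*Real.pi/15) (by positivity) (by linarith [Real.pi_pos]) x
    rwa [hc14] at h'
  have hone : ∀ᵐ (x:ℝ) ∂MeasureTheory.volume, x ≠ 1 := by
    rw [MeasureTheory.ae_iff]
    simpa using MeasureTheory.measure_singleton (1:ℝ)
  have hae : ∀ᵐ (x:ℝ) ∂MeasureTheory.volume, x ∈ Set.uIoc (0:ℝ) 1 →
      (1 + x ^ 6) * (1 - x ^ 10) * (1 + x ^ 12) / (1 - x ^ 30) =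
      (1/(5*Real.sqrt 3)) * (Real.sin (Real.pi/15) / (x^2 - 2*Real.cos (Real.pi/15)*x + 1)) + ((1/(5*Real.sqrt 3)) * (Real.sin (2*Real.pi/15) / (x^2 - 2*Real.cos (2*Real.pi/15)*x + 1)) + ((-1/(5*Real.sqrt 3)) * (Real.sin (4*Real.pi/15) / (x^2 - 2*Real.cos (4*Real.pi/15)*x + 1)) + ((4/(5*Real.sqrt 3)) * (Real.sin (5*Real.pi/15) / (x^2 - 2*Real.cos (5*Real.pi/15)*x + 1)) + ((1/(5*Real.sqrt 3)) * (Real.sin (7*Real.pi/15) / (x^2 - 2*Real.cos (7*Real.pi/15)*x + 1)) + ((1/(5*Real.sqrt 3)) * (Real.sin (8*Real.pi/15) / (x^2 - 2*Real.cos (8*Real.pi/15)*x + 1)) + ((4/(5*Real.sqrt 3)) * (Real.sin (10*Real.pi/15) / (x^2 - 2*Real.cos (10*Real.pi/15)*x + 1)) + ((-1/(5*Real.sqrt 3)) * (Real.sin (11*Real.pi/15) / (x^2 - 2*Real.cos (11*Real.pi/15)*x + 1)) + ((1/(5*Real.sqrt 3)) * (Real.sin (13*Real.pi/15) / (x^2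 - 2*Real.cos (13*Real.pi/15)*x + 1)) + ((1/(5*Real.sqrt 3)) * (Real.sin (14*Real.pi/15) / (x^2 - 2*Real.cos (14*Real.pi/15)*x + 1))))))))))) := by
    filter_upwards [hone] with x hx1 hmem
    rw [Set.uIoc_of_le (by norm_num : (0:ℝ) ≤ 1)] at hmem
    obtain ⟨hx0, hxle⟩ := hmem
    have hxlt : x < 1 := lt_of_le_of_ne hxle hx1
    have hx30 : x^30 < 1 := pow_lt_one₀ (le_of_lt hx0) hxlt (by norm_num)
    have step1 : (1 + x ^ 6) * (1 - x ^ 10) * (1 + x ^ 12) / (1 - x ^ 30) =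
        ((1+x^6)*(1+x^12))/(1 + x^10 + x^20) := by
      rw [div_eq_div_iff (ne_of_gt (by linarith : (0:ℝ) < 1 - x^30)) (by positivity)]
      ring
    rw [hc2, hs2, hc4, hs4, hc5, hs5, hc7, hs7, hc8, hs8, hc10, hs10, hc11, hs11, hc13, hs13, hc14, hs14]
    rw [hc1, hs1, hsqrt3]
    refine step1.trans (Eq.trans (frac10 (hu1 x).ne' (hu2 x).ne' (hu4 x).ne' (hu5 x).ne'
      (hu7 x).ne' (hu8 x).ne' (hu10 x).ne' (hu11 x).ne' (hu13 x).ne' (hu14 x).ne'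
      hWne (keyA c x hq) (keyB c s x hq)) ?_)
    ring
  rw [intervalIntegral.integral_congr_ae hae]
  have I1 : IntervalIntegrable (fun x : ℝ => (1/(5*Real.sqrt 3)) * (Real.sin (Real.pi/15) / (x^2 - 2*Real.cos (Real.pi/15)*x + 1))) MeasureTheory.volume 0 1 :=
    (term_cont (1/(5*Real.sqrt 3)) (Real.pi/15) (by positivity) (by linarith [Real.pi_pos])).intervalIntegrable 0 1
  have I2 : IntervalIntegrable (fun x : ℝ => (1/(5*Real.sqrt 3)) * (Real.sin (2*Real.pi/15) / (x^2 - 2*Real.cos (2*Real.pi/15)*x + 1))) MeasureTheory.volume 0 1 :=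
    (term_cont (1/(5*Real.sqrt 3)) (2*Real.pi/15) (by positivity) (by linarith [Real.pi_pos])).intervalIntegrable 0 1
  have I4 : IntervalIntegrable (fun x : ℝ => (-1/(5*Real.sqrt 3)) * (Real.sin (4*Real.pi/15) / (x^2 - 2*Real.cos (4*Real.pi/15)*x + 1))) MeasureTheory.volume 0 1 :=
    (term_cont (-1/(5*Real.sqrt 3)) (4*Real.pi/15) (by positivity) (by linarith [Real.pi_pos])).intervalIntegrable 0 1
  have I5 : IntervalIntegrable (fun x : ℝ => (4/(5*Real.sqrt 3)) * (Real.sin (5*Real.pi/15) / (x^2 - 2*Real.cos (5*Real.pi/15)*x + 1))) MeasureTheory.volume 0 1 :=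
    (term_cont (4/(5*Real.sqrt 3)) (5*Real.pi/15) (by positivity) (by linarith [Real.pi_pos])).intervalIntegrable 0 1
  have I7 : IntervalIntegrable (fun x : ℝ => (1/(5*Real.sqrt 3)) * (Real.sin (7*Real.pi/15) / (x^2 - 2*Real.cos (7*Real.pi/15)*x + 1))) MeasureTheory.volume 0 1 :=
    (term_cont (1/(5*Real.sqrt 3)) (7*Real.pi/15) (by positivity) (by linarith [Real.pi_pos])).intervalIntegrable 0 1
  have I8 : IntervalIntegrable (fun x : ℝ => (1/(5*Real.sqrt 3)) * (Real.sin (8*Real.pi/15) / (x^2 - 2*Real.cos (8*Real.pi/15)*x + 1))) MeasureTheory.volume 0 1 :=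
    (term_cont (1/(5*Real.sqrt 3)) (8*Real.pi/15) (by positivity) (by linarith [Real.pi_pos])).intervalIntegrable 0 1
  have I10 : IntervalIntegrable (fun x : ℝ => (4/(5*Real.sqrt 3)) * (Real.sin (10*Real.pi/15) / (x^2 - 2*Real.cos (10*Real.pi/15)*x + 1))) MeasureTheory.volume 0 1 :=
    (term_cont (4/(5*Real.sqrt 3)) (10*Real.pi/15) (by positivity) (by linarith [Real.pi_pos])).intervalIntegrable 0 1
  have I11 : IntervalIntegrable (fun x : ℝ => (-1/(5*Real.sqrt 3)) * (Real.sin (11*Real.pi/15) / (x^2 - 2*Real.cos (11*Real.pi/15)*x + 1))) MeasureTheory.volume 0 1 :=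
    (term_cont (-1/(5*Real.sqrt 3)) (11*Real.pi/15) (by positivity) (by linarith [Real.pi_pos])).intervalIntegrable 0 1
  have I13 : IntervalIntegrable (fun x : ℝ => (1/(5*Real.sqrt 3)) * (Real.sin (13*Real.pi/15) / (x^2 - 2*Real.cos (13*Real.pi/15)*x + 1))) MeasureTheory.volume 0 1 :=
    (term_cont (1/(5*Real.sqrt 3)) (13*Real.pi/15) (by positivity) (by linarith [Real.pi_pos])).intervalIntegrable 0 1
  have I14 : IntervalIntegrable (fun x : ℝ => (1/(5*Real.sqrt 3)) * (Real.sin (14*Real.pi/15) / (x^2 - 2*Real.cos (14*Real.pi/15)*x + 1))) MeasureTheory.volume 0 1 :=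
    (term_cont (1/(5*Real.sqrt 3)) (14*Real.pi/15) (by positivity) (by linarith [Real.pi_pos])).intervalIntegrable 0 1
  rw [intervalIntegral.integral_add I1 (I2.add (I4.add (I5.add (I7.add (I8.add (I10.add (I11.add (I13.add I14))))))))]
  rw [intervalIntegral.integral_add I2 (I4.add (I5.add (I7.add (I8.add (I10.add (I11.add (I13.add I14)))))))]
  rw [intervalIntegral.integral_add I4 (I5.add (I7.add (I8.add (I10.add (I11.add (I13.add I14))))))]
  rw [intervalIntegral.integral_add I5 (I7.add (I8.add (I10.add (I11.add (I13.add I14)))))]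
  rw [intervalIntegral.integral_add I7 (I8.add (I10.add (I11.add (I13.add I14))))]
  rw [intervalIntegral.integral_add I8 (I10.add (I11.add (I13.add I14)))]
  rw [intervalIntegral.integral_add I10 (I11.add (I13.add I14))]
  rw [intervalIntegral.integral_add I11 (I13.add I14)]
  rw [intervalIntegral.integral_add I13 (I14)]
  simp only [intervalIntegral.integral_const_mul]
  rw [sin_quad_integral (Real.pi/15) (by positivity) (by linarith [Real.pi_pos])]
  rw [sin_quad_integral (2*Real.pi/15) (by positivity) (by linarith [Real.pi_pos])]
  rw [sin_quad_integral (4*Real.pi/15) (by positivity) (by linarith [Real.pi_pos])]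
  rw [sin_quad_integral (5*Real.pi/15) (by positivity) (by linarith [Real.pi_pos])]
  rw [sin_quad_integral (7*Real.pi/15) (by positivity) (by linarith [Real.pi_pos])]
  rw [sin_quad_integral (8*Real.pi/15) (by positivity) (by linarith [Real.pi_pos])]
  rw [sin_quad_integral (10*Real.pi/15) (by positivity) (by linarith [Real.pi_pos])]
  rw [sin_quad_integral (11*Real.pi/15) (by positivity) (by linarith [Real.pi_pos])]
  rw [sin_quad_integral (13*Real.pi/15) (by positivity) (by linarith [Real.pi_pos])]
  rw [sin_quad_integral (14*Real.pi/15) (by positivity) (by linarith [Real.pi_pos])]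
  have h33 : Real.sqrt 3 * Real.sqrt 3 = 3 := Real.mul_self_sqrt (by norm_num)
  have hfin : ((1/(5*Real.sqrt 3)) * ((Real.pi - Real.pi/15)/2) + ((1/(5*Real.sqrt 3)) * ((Real.pi - 2*Real.pi/15)/2) + ((-1/(5*Real.sqrt 3)) * ((Real.pi - 4*Real.pi/15)/2) + ((4/(5*Real.sqrt 3)) * ((Real.pi - 5*Real.pi/15)/2) + ((1/(5*Real.sqrt 3)) * ((Real.pi - 7*Real.pi/15)/2) + ((1/(5*Real.sqrt 3)) * ((Real.pi - 8*Real.pi/15)/2) + ((4/(5*Real.sqrt 3)) * ((Real.pi - 10*Real.pi/15)/2) + ((-1/(5*Real.sqrt 3)) * ((Real.pi - 11*Real.pi/15)/2) + ((1/(5*Real.sqrt 3)) * ((Real.pi - 13*Real.pi/15)/2) + (1/(5*Real.sqrt 3)) * ((Real.pi - 14*Real.pi/15)/2)))))))))) = (3*Real.pi)/(5*Real.sqrt 3) := by ring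
  rw [hfin, div_eq_div_iff (by positivity) (by norm_num : (5:ℝ) ≠ 0)]
  linear_combination (-5*Real.pi) * h33
end

section
/- The series ∑_{n=0}^∞ (1/(30n+1) + 1/(30n+7) - 1/(30n+11) + 1/(30n+13) - 1/(30n+17) + 1/(30n+19) - 1/(30n+23) - 1/(30n+29)) converges to √3·π/5. -/
open Filter Real intervalIntegral

noncomputable def gg (x : ℝ) : ℝ := (1 + x^2) / (1 + x^2 + x^4)

noncomputable def FF (x : ℝ) : ℝ :=
  (Real.sqrt 3)⁻¹ * (Real.arctan ((2*x+1)/Real.sqrt 3) + Real.arctan ((2*x-1)/Real.sqrt 3))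

lemma s3_pos : (0:ℝ) < Real.sqrt 3 := Real.sqrt_pos.2 (by norm_num)
lemma s3_sq : (Real.sqrt 3)^2 = 3 := Real.sq_sqrt (by norm_num)

lemma hasDerivAt_FF (x : ℝ) : HasDerivAt FF (gg x) x := by
  have hs := s3_pos
  have hs2 := s3_sq
  have h1 : HasDerivAt (fun x : ℝ => (2*x+1)/Real.sqrt 3) (2/Real.sqrt 3) x := by
    simpa using (((hasDerivAt_id x).const_mul 2).add_const 1).div_const (Real.sqrt 3)
  have h2 : HasDerivAt (fun x : ℝ => (2*x-1)/Real.sqrt 3) (2/Real.sqrt 3) x := by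
    simpa using (((hasDerivAt_id x).const_mul 2).sub_const 1).div_const (Real.sqrt 3)
  have a1 := (Real.hasDerivAt_arctan ((2*x+1)/Real.sqrt 3)).comp x h1
  have a2 := (Real.hasDerivAt_arctan ((2*x-1)/Real.sqrt 3)).comp x h2
  have := ((a1.add a2).const_mul ((Real.sqrt 3)⁻¹))
  refine this.congr_deriv (Eq.symm ?_)
  have d1 : (0:ℝ) < 1 + ((2*x+1)/Real.sqrt 3)^2 := by positivity
  have d2 : (0:ℝ) < 1 + ((2*x-1)/Real.sqrt 3)^2 := by positivity
  have p1 : (0:ℝ) < 1 + x^2 + x^4 := by positivity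
  rw [gg]
  field_simp
  ring_nf
  linear_combination (1 + Real.sqrt 3^2 + 9*x^2 + x^2*Real.sqrt 3^2 + 4*x^4) * s3_sq

lemma gg_cont : Continuous gg := by
  apply Continuous.div (by continuity) (by continuity)
  intro x; positivity

lemma gg_nonneg (x : ℝ) : 0 ≤ gg x := by
  unfold gg; positivity

lemma gg_le_one (x : ℝ) : gg x ≤ 1 := by
  unfold gg
  rw [div_le_one (by positivity)]
  nlinarith [sq_nonneg (x^2)]

lemma arctan_s3 : Real.arctan (Real.sqrt 3) = Real.pi / 3 :=
  Real.arctan_eq_of_tan_eq Real.tan_pi_div_three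
    ⟨by linarith [Real.pi_pos], by linarith [Real.pi_pos]⟩

lemma arctan_inv_s3 : Real.arctan (1 / Real.sqrt 3) = Real.pi / 6 :=
  Real.arctan_eq_of_tan_eq Real.tan_pi_div_six
    ⟨by linarith [Real.pi_pos], by linarith [Real.pi_pos]⟩

lemma integral_gg : ∫ x in (0:ℝ)..1, gg x = Real.sqrt 3 * Real.pi / 6 := by
  rw [intervalIntegral.integral_eq_sub_of_hasDerivAt (fun x _ => hasDerivAt_FF x)
    (gg_cont.intervalIntegrable 0 1)]
  have hs := s3_pos
  have hs2 := s3_sq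
  unfold FF
  have e1 : (2*(1:ℝ)+1)/Real.sqrt 3 = Real.sqrt 3 := by
    rw [div_eq_iff hs.ne']; nlinarith
  have e2 : (2*(1:ℝ)-1)/Real.sqrt 3 = 1/Real.sqrt 3 := by norm_num
  have e3 : (2*(0:ℝ)+1)/Real.sqrt 3 = 1/Real.sqrt 3 := by norm_num
  have e4 : (2*(0:ℝ)-1)/Real.sqrt 3 = -(1/Real.sqrt 3) := by ring
  rw [e1, e2, e3, e4, Real.arctan_neg, arctan_s3, arctan_inv_s3]
  field_simp
  linear_combination (-3) * s3_sq

lemma sum_eq_gg (x : ℝ) (N : ℕ) :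
    ∑ n ∈ Finset.range N, (x^(6*n) - x^(6*n+4)) = gg x * (1 - x^(6*N)) := by
  have hden : (0:ℝ) < 1 + x^2 + x^4 := by positivity
  have h := geom_sum_mul (x^6) N
  have hsum : ∑ n ∈ Finset.range N, (x^(6*n) - x^(6*n+4))
      = (1 - x^4) * ∑ n ∈ Finset.range N, (x^6)^n := by
    rw [Finset.mul_sum]
    refine Finset.sum_congr rfl fun n _ => ?_
    rw [← pow_mul, pow_add]
    ring
  rw [hsum, gg, div_mul_eq_mul_div, eq_div_iff hden.ne']
  linear_combination (-(1+x^2)) * h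

lemma T_eq (N : ℕ) :
    ∑ n ∈ Finset.range N, ((1:ℝ)/(6*n+1) - 1/(6*n+5))
      = (∫ x in (0:ℝ)..1, gg x) - ∫ x in (0:ℝ)..1, gg x * x^(6*N) := by
  have hInt : ∀ m : ℕ, IntervalIntegrable (fun x : ℝ => x^m) MeasureTheory.volume 0 1 :=
    fun m => (continuous_pow m).intervalIntegrable 0 1
  have h1 : (∫ x in (0:ℝ)..1, gg x * (1 - x^(6*N)))
      = (∫ x in (0:ℝ)..1, gg x) - ∫ x in (0:ℝ)..1, gg x * x^(6*N) := by
    rw [← intervalIntegral.integral_sub (g := fun x => gg x * x^(6*N)) (gg_cont.intervalIntegrable 0 1)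
      ((gg_cont.mul (continuous_pow _)).intervalIntegrable 0 1)]
    congr 1; ext x; ring
  rw [← h1]
  have h2 : (∫ x in (0:ℝ)..1, gg x * (1 - x^(6*N)))
      = ∫ x in (0:ℝ)..1, ∑ n ∈ Finset.range N, (x^(6*n) - x^(6*n+4)) := by
    congr 1; ext x; rw [sum_eq_gg]
  rw [h2, intervalIntegral.integral_finset_sum (fun n _ => ((hInt _).sub (hInt _)))]
  refine Finset.sum_congr rfl fun n _ => ?_
  rw [intervalIntegral.integral_sub (hInt _) (hInt _), integral_pow, integral_pow]
  push_cast
  norm_num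
  ring

lemma remainder_tendsto :
    Tendsto (fun N : ℕ => ∫ x in (0:ℝ)..1, gg x * x^(6*N)) atTop (nhds 0) := by
  apply squeeze_zero_norm ?_ tendsto_one_div_add_atTop_nhds_zero_nat
  intro N
  have hI1 : IntervalIntegrable (fun x : ℝ => gg x * x^(6*N)) MeasureTheory.volume 0 1 :=
    (gg_cont.mul (continuous_pow _)).intervalIntegrable 0 1
  have hI2 : IntervalIntegrable (fun x : ℝ => x^(6*N)) MeasureTheory.volume 0 1 :=
    (continuous_pow _).intervalIntegrable 0 1
  have h0 : (0:ℝ) ≤ ∫ x in (0:ℝ)..1, gg x * x^(6*N) := by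
    apply intervalIntegral.integral_nonneg (by norm_num)
    intro x hx
    exact mul_nonneg (gg_nonneg x) (pow_nonneg hx.1 _)
  have hle : (∫ x in (0:ℝ)..1, gg x * x^(6*N)) ≤ ∫ x in (0:ℝ)..1, x^(6*N) := by
    apply intervalIntegral.integral_mono_on (by norm_num) hI1 hI2
    intro x hx
    calc gg x * x^(6*N) ≤ 1 * x^(6*N) :=
          mul_le_mul_of_nonneg_right (gg_le_one x) (pow_nonneg hx.1 _)
      _ = x^(6*N) := one_mul _
  have hval : (∫ x in (0:ℝ)..1, x^(6*N)) = 1/(6*(N:ℝ)+1) := by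
    rw [integral_pow]; push_cast; norm_num
  rw [Real.norm_eq_abs, abs_of_nonneg h0]
  refine le_trans (hle.trans hval.le) ?_
  rw [div_le_div_iff₀ (by positivity) (by positivity)]
  nlinarith [Nat.cast_nonneg (α := ℝ) N]

lemma T_tendsto :
    Tendsto (fun N : ℕ => ∑ n ∈ Finset.range N, ((1:ℝ)/(6*n+1) - 1/(6*n+5))) atTop
      (nhds (Real.sqrt 3 * Real.pi / 6)) := by
  simp only [T_eq]
  rw [← integral_gg]
  simpa using (tendsto_const_nhds (x := ∫ x in (0:ℝ)..1, gg x)).sub remainder_tendsto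

lemma block_identity (N : ℕ) :
    (∑ n ∈ Finset.range N,
        ((1 : ℝ) / (30 * n + 1) + 1 / (30 * n + 7) - 1 / (30 * n + 11)
          + 1 / (30 * n + 13) - 1 / (30 * n + 17) + 1 / (30 * n + 19)
          - 1 / (30 * n + 23) - 1 / (30 * n + 29)))
      = (∑ n ∈ Finset.range (5*N), ((1:ℝ)/(6*n+1) - 1/(6*n+5)))
        + (1/5) * ∑ n ∈ Finset.range N, ((1:ℝ)/(6*n+1) - 1/(6*n+5)) := by
  induction N with
  | zero => simp
  | succ N ih =>
    have h5 : 5*(N+1) = (5*N)+1+1+1+1+1 := by ring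
    rw [Finset.sum_range_succ, h5, Finset.sum_range_succ, Finset.sum_range_succ,
        Finset.sum_range_succ, Finset.sum_range_succ, Finset.sum_range_succ,
        Finset.sum_range_succ, ih]
    push_cast
    have h1 : (30*(N:ℝ)+1) > 0 := by positivity
    have h2 : (30*(N:ℝ)+5) > 0 := by positivity
    have h3 : (30*(N:ℝ)+7) > 0 := by positivity
    have h4 : (30*(N:ℝ)+11) > 0 := by positivity
    have h5' : (30*(N:ℝ)+13) > 0 := by positivity
    have h6 : (30*(N:ℝ)+17) > 0 := by positivity
    have h7 : (30*(N:ℝ)+19) > 0 := by positivity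
    have h8 : (30*(N:ℝ)+23) > 0 := by positivity
    have h9 : (30*(N:ℝ)+25) > 0 := by positivity
    have h10 : (30*(N:ℝ)+29) > 0 := by positivity
    have h11 : (6*(N:ℝ)+1) > 0 := by positivity
    have h12 : (6*(N:ℝ)+5) > 0 := by positivity
    field_simp
    ring

theorem series_sqrt3_pi_div_five :
    Tendsto (fun N => ∑ n ∈ Finset.range N,
        ((1 : ℝ) / (30 * n + 1) + 1 / (30 * n + 7) - 1 / (30 * n + 11)
          + 1 / (30 * n + 13) - 1 / (30 * n + 17) + 1 / (30 * n + 19)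
          - 1 / (30 * n + 23) - 1 / (30 * n + 29))) atTop
      (nhds (Real.sqrt 3 * Real.pi / 5)) := by
  simp only [block_identity]
  have h5 : Tendsto (fun N : ℕ => 5*N) atTop atTop :=
    tendsto_atTop_atTop.2 fun b => ⟨b, fun a ha => by omega⟩
  have hA : Tendsto (fun N : ℕ => ∑ n ∈ Finset.range (5*N), ((1:ℝ)/(6*n+1) - 1/(6*n+5)))
      atTop (nhds (Real.sqrt 3 * Real.pi / 6)) := T_tendsto.comp h5
  have hB := hA.add (T_tendsto.const_mul (1/5 : ℝ))
  have : Real.sqrt 3 * Real.pi / 6 + (1/5) * (Real.sqrt 3 * Real.pi / 6)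
      = Real.sqrt 3 * Real.pi / 5 := by ring
  rw [this] at hB
  exact hB
end

section
/- The series ∑_{n=0}^∞ (-1)^n (1/(12n+1) - 1/(12n+5) - 1/(12n+7) + 1/(12n+11)) equals the integral from 0 to 1 of (1-x^4)(1-x^6)/(1+x^12) dx, which equals √2·π/6. -/
open Filter Real

lemma quartic_factor (a b x : ℝ) (h : a^2 + b^2 = 1) :
    x^4 + (2 - 4*a^2)*x^2 + 1 = ((x+a)^2+b^2) * ((x-a)^2+b^2) := by
  linear_combination (-2*x^2 - a^2 - b^2 - 1) * h

lemma integral_quartic (a b : ℝ) (ha0 : 0 < a) (ha1 : a < 1) (hb : 0 < b)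
    (h : a^2 + b^2 = 1) :
    ∫ x in (0:ℝ)..1, (x^2+1)/(x^4 + (2-4*a^2)*x^2 + 1) = Real.pi/(4*b) := by
  have hbne : b ≠ 0 := ne_of_gt hb
  have hpos : ∀ x : ℝ, 0 < x^4 + (2-4*a^2)*x^2 + 1 := by
    intro x
    rw [quartic_factor a b x h]
    have h1 : 0 < (x+a)^2 + b^2 := by positivity
    have h2 : 0 < (x-a)^2 + b^2 := by positivity
    exact mul_pos h1 h2
  set G : ℝ → ℝ := fun x => (1/(2*b)) * (Real.arctan ((x+a)/b) + Real.arctan ((x-a)/b))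
    with hGdef
  have hderiv : ∀ x ∈ Set.uIcc (0:ℝ) 1,
      HasDerivAt G ((x^2+1)/(x^4 + (2-4*a^2)*x^2 + 1)) x := by
    intro x _
    have h1 : HasDerivAt (fun y : ℝ => (y+a)/b) (1/b) x := by
      simpa using ((hasDerivAt_id x).add_const a).div_const b
    have h2 : HasDerivAt (fun y : ℝ => (y-a)/b) (1/b) x := by
      simpa using ((hasDerivAt_id x).sub_const a).div_const b
    have h3 : HasDerivAt (fun y : ℝ => Real.arctan ((y+a)/b))
        ((1 / (1 + ((x+a)/b)^2)) * (1/b)) x :=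
      (Real.hasDerivAt_arctan ((x+a)/b)).comp (h := fun y : ℝ => (y+a)/b) x h1
    have h4 : HasDerivAt (fun y : ℝ => Real.arctan ((y-a)/b))
        ((1 / (1 + ((x-a)/b)^2)) * (1/b)) x :=
      (Real.hasDerivAt_arctan ((x-a)/b)).comp (h := fun y : ℝ => (y-a)/b) x h2
    have h5 := ((h3.add h4).const_mul (1/(2*b)))
    refine HasDerivAt.congr_deriv h5 ?_
    have e1 : 0 < (x+a)^2 + b^2 := by positivity
    have e2 : 0 < (x-a)^2 + b^2 := by positivity
    rw [quartic_factor a b x h]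
    have hb2 : b^2 = 1 - a^2 := by linarith
    have hb3 : b^3 = b*(1 - a^2) := by rw [pow_succ, hb2]; ring
    have hb4 : b^4 = (1 - a^2)^2 := by rw [show b^4 = (b^2)^2 by ring, hb2]
    have hb5 : b^5 = b*(1 - a^2)^2 := by rw [show b^5 = b*(b^2)^2 by ring, hb2]
    have hb6 : b^6 = (1 - a^2)^3 := by rw [show b^6 = (b^2)^3 by ring, hb2]
    have hb7 : b^7 = b*(1 - a^2)^3 := by rw [show b^7 = b*(b^2)^3 by ring, hb2]
    field_simp
    ring_nf
    simp only [hb2, hb3, hb4, hb5, hb6, hb7]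
    ring
  have hcont : ContinuousOn (fun x : ℝ => (x^2+1)/(x^4 + (2-4*a^2)*x^2 + 1))
      (Set.uIcc (0:ℝ) 1) := by
    apply ContinuousOn.div
    · fun_prop
    · fun_prop
    · intro x _; exact ne_of_gt (hpos x)
  rw [intervalIntegral.integral_eq_sub_of_hasDerivAt hderiv
    (hcont.intervalIntegrable)]
  have hG0 : G 0 = 0 := by
    simp only [hGdef, zero_add, zero_sub]
    rw [show (-a)/b = -(a/b) by ring, Real.arctan_neg]
    ring
  have hG1 : G 1 = Real.pi/(4*b) := by
    simp only [hGdef]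
    have hu : 0 < (1+a)/b := by positivity
    have hinv : (1-a)/b = ((1+a)/b)⁻¹ := by
      rw [inv_div]
      rw [div_eq_div_iff hbne (by positivity)]
      linear_combination -h
    rw [hinv, Real.arctan_inv_of_pos hu]
    ring
  rw [hG0, hG1]; ring

lemma integral_value :
    (∫ x in (0:ℝ)..1, (1 - x ^ 4) * (1 - x ^ 6) / (1 + x ^ 12))
      = Real.sqrt 2 * Real.pi / 6 := by
  set s2 := Real.sqrt 2 with hs2def
  set s3 := Real.sqrt 3 with hs3def
  have h2 : s2^2 = 2 := Real.sq_sqrt (by norm_num)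
  have h3 : s3^2 = 3 := Real.sq_sqrt (by norm_num)
  have hs2pos : 0 < s2 := Real.sqrt_pos.mpr (by norm_num)
  have hs3pos : 0 < s3 := Real.sqrt_pos.mpr (by norm_num)
  -- the three (a,b) pairs
  set a1 : ℝ := (s2*s3 + s2)/4 with ha1def
  set b1 : ℝ := (s2*s3 - s2)/4 with hb1def
  have ha1pos : 0 < a1 := by rw [ha1def]; nlinarith
  have hb1pos : 0 < b1 := by rw [hb1def]; nlinarith [sq_nonneg (s3-1)]
  have ha1lt : a1 < 1 := by
    rw [ha1def]
    nlinarith [sq_nonneg (s2*s3 - 5/2), sq_nonneg (s2 - 3/2), hs2pos, hs3pos,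
      mul_pos hs2pos hs3pos]
  have hb1lt : b1 < 1 := by
    rw [hb1def]
    nlinarith [sq_nonneg (s2*s3 - 5/2), hs2pos, hs3pos, mul_pos hs2pos hs3pos]
  have hsum1 : a1^2 + b1^2 = 1 := by
    rw [ha1def, hb1def]
    linear_combination (s2^2/8) * h3 + (1/2) * h2
  have hsum2 : (s2/2)^2 + (s2/2)^2 = 1 := by linear_combination (1/2) * h2
  have hsum3 : b1^2 + a1^2 = 1 := by linarith [hsum1]
  have ha2pos : 0 < s2/2 := by positivity
  have ha2lt : s2/2 < 1 := by nlinarith [sq_nonneg (s2 - 3/2)]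
  -- b-values
  have hbv1 : 2 - 4*a1^2 = -s3 := by
    rw [ha1def]
    linear_combination (-s2^2/4) * h3 + (-s3/2 - 1) * h2
  have hbv2 : 2 - 4*(s2/2)^2 = 0 := by linear_combination (-1) * h2
  have hbv3 : 2 - 4*b1^2 = s3 := by
    rw [hb1def]
    linear_combination (-s2^2/4) * h3 + (s3/2 - 1) * h2
  -- positivity of quartic denominators
  have hq1 : ∀ x : ℝ, 0 < x^4 + (2-4*a1^2)*x^2 + 1 := by
    intro x
    rw [quartic_factor a1 b1 x hsum1]
    positivity
  have hq2 : ∀ x : ℝ, 0 < x^4 + (2-4*(s2/2)^2)*x^2 + 1 := by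
    intro x
    rw [quartic_factor (s2/2) (s2/2) x hsum2]
    positivity
  have hq3 : ∀ x : ℝ, 0 < x^4 + (2-4*b1^2)*x^2 + 1 := by
    intro x
    rw [quartic_factor b1 a1 x hsum3]
    positivity
  have h12 : ∀ x : ℝ, (0:ℝ) < 1 + x^12 := by intro x; positivity
  -- pointwise partial fraction identity
  have key : Set.EqOn
      (fun x : ℝ => (1 - x ^ 4) * (1 - x ^ 6) / (1 + x ^ 12))
      (fun x : ℝ => ((1-s3)/6) * ((x^2+1)/(x^4 + (2-4*a1^2)*x^2 + 1))
        + (2/3) * ((x^2+1)/(x^4 + (2-4*(s2/2)^2)*x^2 + 1))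
        + ((1+s3)/6) * ((x^2+1)/(x^4 + (2-4*b1^2)*x^2 + 1)))
      (Set.uIcc (0:ℝ) 1) := by
    intro x _
    simp only
    rw [hbv1, hbv2, hbv3]
    have d1 : x^4 + -s3*x^2 + 1 ≠ 0 := by
      have := hq1 x; rw [hbv1] at this; exact ne_of_gt this
    have d1' : x^4 + -(s3*x^2) + 1 ≠ 0 := by
      rw [show x^4 + -(s3*x^2) + 1 = x^4 + -s3*x^2 + 1 by ring]; exact d1
    have d2 : x^4 + (0:ℝ)*x^2 + 1 ≠ 0 := by
      have := hq2 x; rw [hbv2] at this; exact ne_of_gt this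
    have d3 : x^4 + s3*x^2 + 1 ≠ 0 := by
      have := hq3 x; rw [hbv3] at this; exact ne_of_gt this
    have d0 : (1:ℝ) + x^12 ≠ 0 := ne_of_gt (h12 x)
    have d1'' : x^2*(x^2 + -s3) + 1 ≠ 0 := by
      rw [show x^2*(x^2 + -s3) + 1 = x^4 + -s3*x^2 + 1 by ring]; exact d1
    have h3' : s3^3 = 3*s3 := by rw [pow_succ, h3]
    have h3'' : s3^4 = 9 := by rw [show s3^4 = (s3^2)^2 by ring, h3]; norm_num
    field_simp [d1', d1'']
    ring_nf
    simp only [h3, h3', h3'']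
    ring
  rw [intervalIntegral.integral_congr key]
  have c1 : ContinuousOn (fun x : ℝ => (x^2+1)/(x^4 + (2-4*a1^2)*x^2 + 1)) (Set.uIcc (0:ℝ) 1) := by
    apply ContinuousOn.div (by fun_prop) (by fun_prop)
    intro x _; exact ne_of_gt (hq1 x)
  have c2 : ContinuousOn (fun x : ℝ => (x^2+1)/(x^4 + (2-4*(s2/2)^2)*x^2 + 1)) (Set.uIcc (0:ℝ) 1) := by
    apply ContinuousOn.div (by fun_prop) (by fun_prop)
    intro x _; exact ne_of_gt (hq2 x)
  have c3 : ContinuousOn (fun x : ℝ => (x^2+1)/(x^4 + (2-4*b1^2)*x^2 + 1)) (Set.uIcc (0:ℝ) 1) := by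
    apply ContinuousOn.div (by fun_prop) (by fun_prop)
    intro x _; exact ne_of_gt (hq3 x)
  rw [intervalIntegral.integral_add (((c1.intervalIntegrable).const_mul _).add
      ((c2.intervalIntegrable).const_mul _)) ((c3.intervalIntegrable).const_mul _),
    intervalIntegral.integral_add ((c1.intervalIntegrable).const_mul _)
      ((c2.intervalIntegrable).const_mul _),
    intervalIntegral.integral_const_mul, intervalIntegral.integral_const_mul,
    intervalIntegral.integral_const_mul]
  rw [integral_quartic a1 b1 ha1pos ha1lt hb1pos hsum1,
    integral_quartic (s2/2) (s2/2) ha2pos ha2lt ha2pos hsum2,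
    integral_quartic b1 a1 hb1pos hb1lt ha1pos hsum3]
  rw [ha1def, hb1def]
  have hb1ne : s2*s3 - s2 ≠ 0 := by nlinarith [sq_nonneg (s3-1)]
  have ha1ne : s2*s3 + s2 ≠ 0 := by positivity
  have hs3ne : s3 - 1 ≠ 0 := by nlinarith
  field_simp
  ring_nf
  simp only [h2, h3]
  ring

lemma series_tendsto :
    Tendsto (fun N => ∑ n ∈ Finset.range N,
        (-1 : ℝ) ^ n * (1 / (12 * n + 1) - 1 / (12 * n + 5) - 1 / (12 * n + 7)
          + 1 / (12 * n + 11))) atTop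
      (nhds (∫ x in (0:ℝ)..1, (1 - x ^ 4) * (1 - x ^ 6) / (1 + x ^ 12))) := by
  have h12 : ∀ x : ℝ, (0:ℝ) < 1 + x^12 := fun x => by positivity
  have hcontf : Continuous (fun x : ℝ => (1 - x ^ 4) * (1 - x ^ 6) / (1 + x ^ 12)) := by
    apply Continuous.div (by fun_prop) (by fun_prop)
    intro x; exact ne_of_gt (h12 x)
  set I : ℝ := ∫ x in (0:ℝ)..1, (1 - x ^ 4) * (1 - x ^ 6) / (1 + x ^ 12) with hI
  -- each term is an integral
  have hpow : ∀ k : ℕ, ∫ x in (0:ℝ)..1, x^k = 1/((k:ℝ)+1) := by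
    intro k
    rw [integral_pow]
    norm_num
  have hterm : ∀ n : ℕ, (-1 : ℝ) ^ n * (1 / (12 * n + 1) - 1 / (12 * n + 5)
        - 1 / (12 * n + 7) + 1 / (12 * n + 11))
      = ∫ x in (0:ℝ)..1, (-1:ℝ)^n *
          (x^(12*n) - x^(12*n+4) - x^(12*n+6) + x^(12*n+10)) := by
    intro n
    rw [intervalIntegral.integral_const_mul]
    rw [intervalIntegral.integral_add (((continuous_pow _).intervalIntegrable 0 1).sub
          ((continuous_pow _).intervalIntegrable 0 1) |>.sub
          ((continuous_pow _).intervalIntegrable 0 1))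
        ((continuous_pow _).intervalIntegrable 0 1),
      intervalIntegral.integral_sub (((continuous_pow _).intervalIntegrable 0 1).sub
          ((continuous_pow _).intervalIntegrable 0 1))
        ((continuous_pow _).intervalIntegrable 0 1),
      intervalIntegral.integral_sub ((continuous_pow _).intervalIntegrable 0 1)
        ((continuous_pow _).intervalIntegrable 0 1)]
    rw [hpow, hpow, hpow, hpow]
    push_cast
    ring
  -- remainder
  set R : ℕ → ℝ := fun N => ∫ x in (0:ℝ)..1,
      x^(12*N) * ((1 - x ^ 4) * (1 - x ^ 6) / (1 + x ^ 12)) with hR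
  have hsplit : ∀ N : ℕ, (∑ n ∈ Finset.range N,
      (-1 : ℝ) ^ n * (1 / (12 * n + 1) - 1 / (12 * n + 5) - 1 / (12 * n + 7)
          + 1 / (12 * n + 11))) = I - (-1:ℝ)^N * R N := by
    intro N
    have h1 : (∑ n ∈ Finset.range N,
        (-1 : ℝ) ^ n * (1 / (12 * n + 1) - 1 / (12 * n + 5) - 1 / (12 * n + 7)
          + 1 / (12 * n + 11)))
        = ∫ x in (0:ℝ)..1, (∑ n ∈ Finset.range N, (-1:ℝ)^n *
            (x^(12*n) - x^(12*n+4) - x^(12*n+6) + x^(12*n+10))) := by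
      rw [intervalIntegral.integral_finset_sum]
      · exact Finset.sum_congr rfl fun n _ => hterm n
      · intro n _
        exact Continuous.intervalIntegrable (by fun_prop) 0 1
    rw [h1]
    have h2 : ∀ x : ℝ, (∑ n ∈ Finset.range N, (-1:ℝ)^n *
          (x^(12*n) - x^(12*n+4) - x^(12*n+6) + x^(12*n+10)))
        = (1 - x ^ 4) * (1 - x ^ 6) / (1 + x ^ 12)
          - (-1:ℝ)^N * (x^(12*N) * ((1 - x ^ 4) * (1 - x ^ 6) / (1 + x ^ 12))) := by
      intro x
      have hx12 : (0:ℝ) ≤ x^12 := by positivity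
      have hne : (-x^12 : ℝ) ≠ 1 := by intro hc; nlinarith
      have hstep : ∀ n : ℕ, (-1:ℝ)^n *
            (x^(12*n) - x^(12*n+4) - x^(12*n+6) + x^(12*n+10))
          = (-x^12)^n * (1 - x^4 - x^6 + x^10) := by
        intro n
        rw [show (-x^12 : ℝ)^n = (-1:ℝ)^n * x^(12*n) by rw [neg_pow, ← pow_mul],
          pow_add, pow_add, pow_add]
        ring
      rw [Finset.sum_congr rfl fun n _ => hstep n, ← Finset.sum_mul, geom_sum_eq hne]
      have hpw : (-x^12 : ℝ)^N = (-1:ℝ)^N * x^(12*N) := by rw [neg_pow, pow_mul]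
      have hd0 : (1:ℝ) + x^12 ≠ 0 := ne_of_gt (h12 x)
      have hd1 : (-x^12 : ℝ) - 1 ≠ 0 := by
        intro hc
        apply hd0
        linarith [hc]
      rw [hpw]
      field_simp
      ring
    rw [intervalIntegral.integral_congr (fun x _ => h2 x)]
    rw [intervalIntegral.integral_sub (hcontf.intervalIntegrable 0 1)
        (Continuous.intervalIntegrable (by continuity) 0 1),
      intervalIntegral.integral_const_mul]
  -- remainder tends to zero
  have hRbound : ∀ N : ℕ, 0 ≤ R N ∧ R N ≤ 1/(12*(N:ℝ)+1) := by
    intro N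
    constructor
    · apply intervalIntegral.integral_nonneg (by norm_num)
      intro x hx
      obtain ⟨hx0, hx1⟩ := hx
      have e4 : x^4 ≤ 1 := pow_le_one₀ hx0 hx1
      have e6 : x^6 ≤ 1 := pow_le_one₀ hx0 hx1
      apply mul_nonneg (pow_nonneg hx0 _)
      apply div_nonneg _ (le_of_lt (h12 x))
      apply mul_nonneg <;> linarith
    · have : R N ≤ ∫ x in (0:ℝ)..1, x^(12*N) := by
        apply intervalIntegral.integral_mono_on (by norm_num)
          (Continuous.intervalIntegrable (by fun_prop) 0 1)
          ((continuous_pow _).intervalIntegrable 0 1)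
        intro x hx
        obtain ⟨hx0, hx1⟩ := hx
        have e4 : x^4 ≤ 1 := pow_le_one₀ hx0 hx1
        have e6 : x^6 ≤ 1 := pow_le_one₀ hx0 hx1
        have hfle : (1 - x ^ 4) * (1 - x ^ 6) / (1 + x ^ 12) ≤ 1 := by
          rw [div_le_one (h12 x)]
          nlinarith [pow_nonneg hx0 4, pow_nonneg hx0 6, pow_nonneg hx0 10,
            pow_nonneg hx0 12]
        have hfnn : 0 ≤ (1 - x ^ 4) * (1 - x ^ 6) / (1 + x ^ 12) := by
          apply div_nonneg _ (le_of_lt (h12 x))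
          apply mul_nonneg <;> linarith
        calc x^(12*N) * ((1 - x ^ 4) * (1 - x ^ 6) / (1 + x ^ 12))
            ≤ x^(12*N) * 1 := by
              apply mul_le_mul_of_nonneg_left hfle (pow_nonneg hx0 _)
          _ = x^(12*N) := by ring
      calc R N ≤ ∫ x in (0:ℝ)..1, x^(12*N) := this
        _ = 1/(12*(N:ℝ)+1) := by rw [hpow]; push_cast; ring
  have hbound_tendsto : Tendsto (fun N : ℕ => 1/(12*(N:ℝ)+1)) atTop (nhds 0) := by
    have h1 : Tendsto (fun N : ℕ => 12*(N:ℝ)+1) atTop atTop := by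
      apply tendsto_atTop_add_const_right
      exact (tendsto_natCast_atTop_atTop).const_mul_atTop (by norm_num)
    simp only [one_div]; exact h1.inv_tendsto_atTop
  have hRtendsto : Tendsto R atTop (nhds 0) :=
    tendsto_of_tendsto_of_tendsto_of_le_of_le tendsto_const_nhds hbound_tendsto
      (fun N => (hRbound N).1) (fun N => (hRbound N).2)
  have hsigned : Tendsto (fun N : ℕ => (-1:ℝ)^N * R N) atTop (nhds 0) := by
    have hneg : Tendsto (fun N : ℕ => -(R N)) atTop (nhds 0) := by
      simpa using hRtendsto.neg
    apply tendsto_of_tendsto_of_tendsto_of_le_of_le hneg hRtendsto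
    · intro N
      have h0 := (hRbound N).1
      show -(R N) ≤ (-1:ℝ)^N * R N
      rcases Nat.even_or_odd N with h | h
      · rw [h.neg_one_pow, one_mul]; linarith
      · rw [h.neg_one_pow, neg_one_mul]
    · intro N
      have h0 := (hRbound N).1
      show (-1:ℝ)^N * R N ≤ R N
      rcases Nat.even_or_odd N with h | h
      · rw [h.neg_one_pow, one_mul]
      · rw [h.neg_one_pow, neg_one_mul]; linarith
  have := tendsto_const_nhds (x := I) (f := atTop (α := ℕ)) |>.sub hsigned
  simp only [sub_zero] at this
  exact this.congr (fun N => (hsplit N).symm)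

theorem series_sqrt2_pi_div_six :
    Tendsto (fun N => ∑ n ∈ Finset.range N,
        (-1 : ℝ) ^ n * (1 / (12 * n + 1) - 1 / (12 * n + 5) - 1 / (12 * n + 7)
          + 1 / (12 * n + 11))) atTop
      (nhds (∫ x in (0:ℝ)..1, (1 - x ^ 4) * (1 - x ^ 6) / (1 + x ^ 12))) ∧
    (∫ x in (0:ℝ)..1, (1 - x ^ 4) * (1 - x ^ 6) / (1 + x ^ 12))
      = Real.sqrt 2 * Real.pi / 6 := by
  exact ⟨series_tendsto, integral_value⟩
end
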